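/- Let n ≥ 1 and let T : ℝⁿ → ℝⁿ be monotone and additively homogeneous. Let I, J ⊆ {1,…,n} be nonempty disjoint sets and α, β ∈ ℝ be such that: T_i(t·e_{Iᶜ}) ≤ β for all i ∈ I and all t ≥ 0; T_j(−t·e_{Jᶜ}) ≥ α for all j ∈ J and all t ≥ 0; and α ≤ T_ℓ(0) ≤ β for all ℓ ∈ {1,…,n}. Let s > β − α and define S : ℝⁿ → ℝⁿ by S(x) = s·e_J + T(x). Then there is no λ ∈ ℝ such that for every i ∈ {1,…,n} the sequence k ↦ [S^k(0)]_i / k converges to λ as k → ∞. -/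

import Mathlib

/-- `T` is additively homogeneous: `T(x + c·e) = T(x) + c·e`. -/
def AddHomog (n : ℕ) (T : (Fin n → ℝ) → (Fin n → ℝ)) : Prop :=
  ∀ (x : Fin n → ℝ) (c : ℝ), T (fun i => x i + c) = fun i => T x i + c

/-- `Δ` is a MIN-dominion for `T`: there is `β` with `T_i(t·e_{Δᶜ}) ≤ β`
for all `i ∈ Δ` and all `t ≥ 0`. -/
def MinDominion (n : ℕ) (T : (Fin n → ℝ) → (Fin n → ℝ)) (Δ : Set (Fin n)) : Prop :=
  Δ.Nonempty ∧ ∃ β : ℝ, ∀ i ∈ Δ, ∀ t : ℝ, 0 ≤ t →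
    T (Δᶜ.indicator fun _ => t) i ≤ β

/-- `Δ` is a MAX-dominion for `T`: there is `α` with `T_i(−t·e_{Δᶜ}) ≥ α`
for all `i ∈ Δ` and all `t ≥ 0`. -/
def MaxDominion (n : ℕ) (T : (Fin n → ℝ) → (Fin n → ℝ)) (Δ : Set (Fin n)) : Prop :=
  Δ.Nonempty ∧ ∃ α : ℝ, ∀ i ∈ Δ, ∀ t : ℝ, 0 ≤ t →
    α ≤ T (Δᶜ.indicator fun _ => -t) i

/-- Hilbert's seminorm `‖x‖_H = max_i x_i − min_i x_i`. -/
noncomputable def hilbertSeminorm (n : ℕ) (x : Fin n → ℝ) : ℝ :=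
  (⨆ i, x i) - ⨅ i, x i

/-- The additive slice space `A_α^β(T) = {x : α·e + x ≤ T(x) ≤ β·e + x}`. -/
def addSliceSpace (n : ℕ) (T : (Fin n → ℝ) → (Fin n → ℝ)) (α β : ℝ) : Set (Fin n → ℝ) :=
  {x | ∀ i, α + x i ≤ T x i ∧ T x i ≤ β + x i}

theorem stmt8 (n : ℕ) (hn : 1 ≤ n)
    (T : (Fin n → ℝ) → (Fin n → ℝ))
    (hmono : Monotone T) (hhom : AddHomog n T)
    (I J : Set (Fin n)) (hI : I.Nonempty) (hJ : J.Nonempty) (hIJ : Disjoint I J)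
    (α β : ℝ)
    (hmin : ∀ i ∈ I, ∀ t : ℝ, 0 ≤ t → T (Iᶜ.indicator fun _ => t) i ≤ β)
    (hmax : ∀ j ∈ J, ∀ t : ℝ, 0 ≤ t → α ≤ T (Jᶜ.indicator fun _ => -t) j)
    (h0 : ∀ l : Fin n, α ≤ T (fun _ => 0) l ∧ T (fun _ => 0) l ≤ β)
    (s : ℝ) (hs : β - α < s) :
    ¬ ∃ lam : ℝ, ∀ i : Fin n,
        Filter.Tendsto
          (fun k : ℕ =>
            ((fun x => fun j => J.indicator (fun _ => s) j + T x j)^[k] (fun _ => 0)) i / k)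
          Filter.atTop (nhds lam) := by
  rintro ⟨lam, hlam⟩
  set f : (Fin n → ℝ) → (Fin n → ℝ) :=
    (fun x => fun j => J.indicator (fun _ => s) j + T x j) with hf
  obtain ⟨i0, hi0⟩ := hI
  obtain ⟨j0, hj0⟩ := hJ
  have hab : α ≤ β := le_trans (h0 ⟨0, hn⟩).1 (h0 ⟨0, hn⟩).2
  have hs0 : 0 ≤ s := le_of_lt (lt_of_le_of_lt (sub_nonneg.mpr hab) hs)
  have hfmono : Monotone f := by
    intro x y hxy j
    exact add_le_add_right (hmono hxy j) _
  -- lower bound: (f^[k] 0) l ≥ k*α + (k*s if l ∈ J)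
  have hlow : ∀ k : ℕ, ∀ l, (k : ℝ) * α + J.indicator (fun _ => (k : ℝ) * s) l
      ≤ f^[k] (fun _ => 0) l := by
    intro k
    induction k with
    | zero => intro l; by_cases hlJ : l ∈ J <;> simp [Set.indicator_apply, hlJ]
    | succ k ih =>
      intro l
      rw [Function.iterate_succ_apply']
      have step := hfmono (fun m => ih m) l
      refine le_trans ?_ step
      have hnn : (0:ℝ) ≤ (k : ℝ) * s := mul_nonneg (Nat.cast_nonneg k) hs0
      have hv : (fun m => (k : ℝ) * α + J.indicator (fun _ => (k : ℝ) * s) m)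
          = fun m => (Jᶜ.indicator (fun _ => -((k : ℝ) * s)) m) + (k : ℝ) * (α + s) := by
        funext m
        by_cases hmJ : m ∈ J <;> simp [Set.indicator_apply, hmJ] <;> ring
      rw [hv]
      have hT := hhom (Jᶜ.indicator (fun _ => -((k : ℝ) * s))) ((k : ℝ) * (α + s))
      have hTl : T (fun m => Jᶜ.indicator (fun _ => -((k : ℝ) * s)) m + (k : ℝ) * (α + s)) l
          = T (Jᶜ.indicator (fun _ => -((k : ℝ) * s))) l + (k : ℝ) * (α + s) :=
        congrFun hT l
      push_cast
      simp only [hf]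
      rw [hTl]
      by_cases hlJ : l ∈ J
      · have hm := hmax l hlJ ((k : ℝ) * s) hnn
        simp [Set.indicator_apply, hlJ]
        nlinarith [hm]
      · have hy : (fun _ : Fin n => -((k:ℝ) * s)) ≤ Jᶜ.indicator (fun _ => -((k : ℝ) * s)) := by
          intro m
          by_cases hmJ : m ∈ J <;> simp [Set.indicator_apply, hmJ] <;> linarith
        have h1 : T (fun _ : Fin n => -((k:ℝ) * s)) l
            = T (fun _ => 0) l + (-((k:ℝ) * s)) := by
          have := congrFun (hhom (fun _ => 0) (-((k:ℝ) * s))) l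
          simpa using this
        have h2 := hmono hy l
        have h3 := (h0 l).1
        simp [Set.indicator_apply, hlJ]
        nlinarith [h2, h1.symm.le, h1.le]
  -- upper bound: (f^[k] 0) l ≤ k*β + (k*s if l ∉ I)
  have hupp : ∀ k : ℕ, ∀ l, f^[k] (fun _ => 0) l
      ≤ (k : ℝ) * β + Iᶜ.indicator (fun _ => (k : ℝ) * s) l := by
    intro k
    induction k with
    | zero => intro l; by_cases hlI : l ∈ I <;> simp [Set.indicator_apply, hlI]
    | succ k ih =>
      intro l
      rw [Function.iterate_succ_apply']
      have step := hfmono (fun m => ih m) l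
      refine le_trans step ?_
      have hnn : (0:ℝ) ≤ (k : ℝ) * s := mul_nonneg (Nat.cast_nonneg k) hs0
      have hw : (fun m => (k : ℝ) * β + Iᶜ.indicator (fun _ => (k : ℝ) * s) m)
          = fun m => (Iᶜ.indicator (fun _ => (k : ℝ) * s) m) + (k : ℝ) * β := by
        funext m; ring
      rw [hw]
      have hT := hhom (Iᶜ.indicator (fun _ => (k : ℝ) * s)) ((k : ℝ) * β)
      have hTl : T (fun m => Iᶜ.indicator (fun _ => (k : ℝ) * s) m + (k : ℝ) * β) l
          = T (Iᶜ.indicator (fun _ => (k : ℝ) * s)) l + (k : ℝ) * β :=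
        congrFun hT l
      push_cast
      simp only [hf]
      rw [hTl]
      by_cases hlI : l ∈ I
      · have hm := hmin l hlI ((k : ℝ) * s) hnn
        have hlJ : l ∉ J := fun h => hIJ.ne_of_mem hlI h rfl
        simp [Set.indicator_apply, hlI, hlJ]
        nlinarith [hm]
      · have hy : Iᶜ.indicator (fun _ => ((k:ℝ) * s)) ≤ (fun _ : Fin n => ((k:ℝ) * s)) := by
          intro m
          by_cases hmI : m ∈ I <;> simp [Set.indicator_apply, hmI] <;> linarith [hnn]
        have h1 : T (fun _ : Fin n => ((k:ℝ) * s)) l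
            = T (fun _ => 0) l + ((k:ℝ) * s) := by
          have := congrFun (hhom (fun _ => 0) ((k:ℝ) * s)) l
          simpa using this
        have h2 := hmono hy l
        have h3 := (h0 l).2
        have hind : J.indicator (fun _ => s) l ≤ s := by
          by_cases hlJ : l ∈ J <;> simp [Set.indicator_apply, hlJ, hs0]
        simp [Set.indicator_apply, hlI]
        nlinarith [h2, h1.le]
  -- conclude
  have hub : lam ≤ β := by
    refine le_of_tendsto (hlam i0) ?_
    refine Filter.eventually_atTop.mpr ⟨1, fun k hk => ?_⟩
    have hkpos : (0:ℝ) < (k : ℝ) := by exact_mod_cast hk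
    rw [div_le_iff₀ hkpos]
    have := hupp k i0
    have hi0c : i0 ∉ Iᶜ := fun h => h hi0
    simp [Set.indicator_apply, hi0c, hi0] at this
    show (f^[k] (fun _ => 0)) i0 ≤ β * (k:ℝ)
    linarith [this]
  have hlb : α + s ≤ lam := by
    refine ge_of_tendsto (hlam j0) ?_
    refine Filter.eventually_atTop.mpr ⟨1, fun k hk => ?_⟩
    have hkpos : (0:ℝ) < (k : ℝ) := by exact_mod_cast hk
    rw [le_div_iff₀ hkpos]
    have := hlow k j0
    simp [Set.indicator_apply, hj0] at this
    show (α + s) * (k:ℝ) ≤ (f^[k] (fun _ => 0)) j0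
    nlinarith [this]
  linarith
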